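/- Let A₀, A₁, …, A_d ∈ ℝ^{m×n}, b ∈ ℝ^m, and A(θ) = A₀ + Σ_{j=1}^d θ_j A_j. Suppose P_i ∈ ℝ^{m_i×m} (i = 1,…,d) satisfy P_i A_j = 0 for i ≠ j (i, j ∈ {1,…,d}), P₀ ∈ ℝ^{m₀×m} satisfies P₀A_j = 0 for j = 1,…,d, and there exist M_i ∈ ℝ^{m×m_i} (i = 0,…,d) with Σ_{i=0}^d M_iP_i = I. Then for any z ∈ ℝ^n the following are equivalent: (a) there exists θ ∈ ℝ^d with −1 ≤ θ ≤ 1 and A(θ)z = b; (b) P₀A₀z = P₀b and, for every i ∈ {1,…,d} and every positive semidefinite N_i ∈ S₊^{m_i}, (b − A₀z)ᵀP_iᵀN_iP_i(b − A₀z) ≤ zᵀA_iᵀP_iᵀN_iP_iA_i z. -/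

import Mathlib

open Matrix

lemma dp_self_nonneg {k : ℕ} (v : Fin k → ℝ) : 0 ≤ v ⬝ᵥ v :=
  Finset.sum_nonneg fun i _ => mul_self_nonneg (v i)

lemma sum_mulVec' {k m n : ℕ} (s : Finset (Fin k)) (f : Fin k → Matrix (Fin m) (Fin n) ℝ)
    (x : Fin n → ℝ) : (∑ i ∈ s, f i) *ᵥ x = ∑ i ∈ s, f i *ᵥ x := by
  funext j
  simp only [Matrix.mulVec, dotProduct, Finset.sum_apply, Matrix.sum_apply,
    Finset.sum_mul]
  rw [Finset.sum_comm]

lemma vecMulVec_mulVec' {k : ℕ} (w v : Fin k → ℝ) :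
    vecMulVec w w *ᵥ v = fun i => w i * (w ⬝ᵥ v) := by
  funext i; simp [vecMulVec, Matrix.mulVec, dotProduct, Finset.mul_sum, mul_assoc]

lemma vecMulVec_quad {k : ℕ} (w v : Fin k → ℝ) :
    v ⬝ᵥ (vecMulVec w w *ᵥ v) = (w ⬝ᵥ v) ^ 2 := by
  rw [vecMulVec_mulVec']
  simp only [dotProduct, sq]
  rw [Finset.sum_mul]
  apply Finset.sum_congr rfl
  intros; ring

lemma vecMulVec_psd {k : ℕ} (w : Fin k → ℝ) : (vecMulVec w w).PosSemidef := by
  refine Matrix.PosSemidef.of_dotProduct_mulVec_nonneg ?_ ?_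
  · ext i j; simp [Matrix.IsHermitian, vecMulVec, mul_comm]
  · intro x
    have hx : star x = x := rfl
    calc (0:ℝ) ≤ (w ⬝ᵥ x) ^ 2 := sq_nonneg _
    _ = x ⬝ᵥ (vecMulVec w w *ᵥ x) := (vecMulVec_quad w x).symm
    _ = star x ⬝ᵥ (vecMulVec w w *ᵥ x) := by rw [hx]

lemma scalar_of_sq_le {k : ℕ} (u v : Fin k → ℝ)
    (h : ∀ w : Fin k → ℝ, (w ⬝ᵥ v) ^ 2 ≤ (w ⬝ᵥ u) ^ 2) :
    ∃ c : ℝ, -1 ≤ c ∧ c ≤ 1 ∧ v = c • u := by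
  by_cases hu : u = 0
  · refine ⟨0, by norm_num, by norm_num, ?_⟩
    subst hu
    have hv : ∀ w, w ⬝ᵥ v = 0 := by
      intro w; have := h w; simp at this
      exact this
    funext i
    have := hv (Pi.single i 1)
    simpa [dotProduct, Pi.single_apply] using this
  · have huu : (0:ℝ) < u ⬝ᵥ u := by
      rcases lt_or_eq_of_le (dp_self_nonneg u) with h' | h'
      · exact h'
      · exact absurd (dotProduct_self_eq_zero.mp h'.symm) hu
    set c := (u ⬝ᵥ v) / (u ⬝ᵥ u) with hc
    set r := v - c • u with hr
    have hru : u ⬝ᵥ r = 0 := by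
      simp [hr, dotProduct_sub, dotProduct_smul, hc, smul_eq_mul,
        div_mul_cancel₀, huu.ne']
    have hru' : r ⬝ᵥ u = 0 := by rwa [dotProduct_comm] at hru
    have hrr : r ⬝ᵥ r = 0 := by
      have h2 := h r
      have hv' : v = r + c • u := by rw [hr]; abel
      have hrv : r ⬝ᵥ v = r ⬝ᵥ r := by
        rw [hv', dotProduct_add, dotProduct_smul, smul_eq_mul, hru', mul_zero,
          add_zero]
      rw [hrv, hru'] at h2
      simp at h2
      simp [h2]
    have hr0 : r = 0 := dotProduct_self_eq_zero.mp hrr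
    have hveq : v = c • u := by
      have := sub_eq_zero.mp hr0
      rw [← this]
    have hc2 : c ^ 2 ≤ 1 := by
      have h3 := h u
      rw [hveq] at h3
      have h4 : (u ⬝ᵥ c • u) = c * (u ⬝ᵥ u) := by
        rw [dotProduct_smul, smul_eq_mul]
      rw [h4] at h3
      nlinarith [mul_pos huu huu]
    exact ⟨c, by nlinarith [sq_nonneg (c + 1)], by nlinarith [sq_nonneg (c - 1)], hveq⟩

/-- Under the tightness condition `∑ᵢ MᵢPᵢ = I`, the nonconvex quadratic
inequalities over the field `z` (plus the affine constraint `P₀A₀z = P₀b`)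
are equivalent to the physics equation with interval-constrained parameters. -/
theorem physics_iff_quad_ineqs (d m n m0 : ℕ) (mdim : Fin d → ℕ)
    (A0 : Matrix (Fin m) (Fin n) ℝ) (A : Fin d → Matrix (Fin m) (Fin n) ℝ)
    (b : Fin m → ℝ)
    (P : (i : Fin d) → Matrix (Fin (mdim i)) (Fin m) ℝ)
    (P0 : Matrix (Fin m0) (Fin m) ℝ)
    (hP : ∀ i j : Fin d, i ≠ j → P i * A j = 0)
    (hP0 : ∀ j : Fin d, P0 * A j = 0)
    (M : (i : Fin d) → Matrix (Fin m) (Fin (mdim i)) ℝ)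
    (M0 : Matrix (Fin m) (Fin m0) ℝ)
    (hM : M0 * P0 + ∑ i, M i * P i = 1)
    (z : Fin n → ℝ) :
    (∃ θ : Fin d → ℝ, (∀ i, -1 ≤ θ i ∧ θ i ≤ 1) ∧
        (A0 + ∑ j, θ j • A j) *ᵥ z = b) ↔
    (P0 *ᵥ (A0 *ᵥ z) = P0 *ᵥ b ∧
      ∀ i : Fin d, ∀ N : Matrix (Fin (mdim i)) (Fin (mdim i)) ℝ,
        N.PosSemidef →
        (P i *ᵥ (b - A0 *ᵥ z)) ⬝ᵥ (N *ᵥ (P i *ᵥ (b - A0 *ᵥ z))) ≤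
          (P i *ᵥ (A i *ᵥ z)) ⬝ᵥ (N *ᵥ (P i *ᵥ (A i *ᵥ z)))) := by
  have hsum : ∀ (p : ℕ) (Q : Matrix (Fin p) (Fin m) ℝ) (f : Fin d → Fin m → ℝ),
      Q *ᵥ (∑ j, f j) = ∑ j, Q *ᵥ (f j) := by
    intro p Q f
    funext i
    simp only [Matrix.mulVec, dotProduct, Finset.sum_apply, Finset.sum_apply,
      Finset.mul_sum]
    rw [Finset.sum_comm]
  constructor
  · rintro ⟨θ, hθ, heq⟩
    have hb : b - A0 *ᵥ z = ∑ j, θ j • (A j *ᵥ z) := by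
      rw [← heq, add_mulVec, sum_mulVec']
      simp only [smul_mulVec]
      abel
    constructor
    · have h1 : P0 *ᵥ (b - A0 *ᵥ z) = 0 := by
        rw [hb, hsum]
        apply Finset.sum_eq_zero
        intro j _
        rw [mulVec_smul, mulVec_mulVec, hP0 j, zero_mulVec, smul_zero]
      rw [mulVec_sub] at h1
      rw [eq_comm, ← sub_eq_zero]
      exact h1
    · intro i N hN
      have hPi : P i *ᵥ (b - A0 *ᵥ z) = θ i • (P i *ᵥ (A i *ᵥ z)) := by
        rw [hb, hsum]
        rw [Fintype.sum_eq_single i]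
        · rw [mulVec_smul]
        · intro j hj
          rw [mulVec_smul, mulVec_mulVec, hP i j (Ne.symm hj), zero_mulVec, smul_zero]
      set u := P i *ᵥ (A i *ᵥ z) with hu
      have hq0 : 0 ≤ u ⬝ᵥ (N *ᵥ u) := by
        have := hN.dotProduct_mulVec_nonneg u
        simpa using this
      rw [hPi]
      rw [mulVec_smul, smul_dotProduct, dotProduct_smul, smul_eq_mul, smul_eq_mul]
      have hθi := hθ i
      have hsq : θ i * θ i ≤ 1 := by nlinarith
      nlinarith [mul_le_mul_of_nonneg_right hsq hq0]
  · rintro ⟨h0, hq⟩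
    have key : ∀ i : Fin d, ∃ c : ℝ, -1 ≤ c ∧ c ≤ 1 ∧
        P i *ᵥ (b - A0 *ᵥ z) = c • (P i *ᵥ (A i *ᵥ z)) := by
      intro i
      apply scalar_of_sq_le
      intro w
      have := hq i (vecMulVec w w) (vecMulVec_psd w)
      rwa [vecMulVec_quad, vecMulVec_quad] at this
    choose θ hθ1 hθ2 hθ3 using key
    refine ⟨θ, fun i => ⟨hθ1 i, hθ2 i⟩, ?_⟩
    set x := b - A0 *ᵥ z - ∑ j, θ j • (A j *ᵥ z) with hx
    have hP0x : P0 *ᵥ x = 0 := by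
      rw [hx, mulVec_sub, mulVec_sub, hsum]
      have h2 : ∀ j : Fin d, P0 *ᵥ (θ j • (A j *ᵥ z)) = 0 := by
        intro j
        rw [mulVec_smul, mulVec_mulVec, hP0 j, zero_mulVec, smul_zero]
      rw [Finset.sum_congr rfl fun j _ => h2 j]
      simp [h0]
    have hPix : ∀ i : Fin d, P i *ᵥ x = 0 := by
      intro i
      rw [hx, mulVec_sub, hsum]
      have h2 : ∀ j ≠ i, P i *ᵥ (θ j • (A j *ᵥ z)) = 0 := by
        intro j hj
        rw [mulVec_smul, mulVec_mulVec, hP i j (Ne.symm hj), zero_mulVec, smul_zero]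
      rw [Fintype.sum_eq_single i h2, mulVec_smul, ← hθ3 i]
      abel
    have hx0 : x = 0 := by
      calc x = (M0 * P0 + ∑ i, M i * P i) *ᵥ x := by rw [hM, one_mulVec]
      _ = M0 *ᵥ (P0 *ᵥ x) + ∑ i, M i *ᵥ (P i *ᵥ x) := by
          rw [add_mulVec, sum_mulVec']
          simp [mulVec_mulVec]
      _ = 0 := by
          rw [hP0x]
          rw [Finset.sum_congr rfl fun i _ => by rw [hPix i, mulVec_zero]]
          simp
    have hb' : b - A0 *ᵥ z = ∑ j, θ j • (A j *ᵥ z) := by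
      rwa [hx, sub_eq_zero] at hx0
    rw [add_mulVec, sum_mulVec']
    simp only [smul_mulVec]
    rw [← hb']
    abel
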